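/- Let ρ be a 2×2 density matrix with Bloch components nᵢ = Re Tr(ρ·σᵢ) for i ∈ {x,y,z}, and let θ, φ ∈ ℝ. Define the basis vectors u = (cos(θ/2), e^{iφ}·sin(θ/2)) and d = (sin(θ/2), −e^{iφ}·cos(θ/2)) in ℂ², and let M be the 2×2 matrix of ρ in the basis B₁ = {u, d}, i.e. M₀₀ = uᴴρu, M₀₁ = uᴴρd, M₁₀ = dᴴρu, M₁₁ = dᴴρd. Then the robustness of imaginarity of ρ in the basis B₁ satisfies (1/2)‖M − Mᵀ‖₁ = |n_y·cos φ − n_x·sin φ|. -/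

import Mathlib

open Matrix Kronecker
open scoped ComplexOrder

/-- Trace norm of a square complex matrix: `Tr[sqrt(Aᴴ A)]`. -/
noncomputable def traceNorm {n : Type*} [Fintype n] [DecidableEq n]
    (A : Matrix n n ℂ) : ℝ :=
  (((Matrix.posSemidef_conjTranspose_mul_self A).1.eigenvectorUnitary : Matrix n n ℂ) *
    diagonal (((↑) : ℝ → ℂ) ∘ (√·) ∘ (Matrix.posSemidef_conjTranspose_mul_self A).1.eigenvalues) *
    (star ((Matrix.posSemidef_conjTranspose_mul_self A).1.eigenvectorUnitary : Matrix n n ℂ))).trace.re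

/-- Robustness of imaginarity: `(1/2) ‖ρ - ρᵀ‖₁`. -/
noncomputable def roi {n : Type*} [Fintype n] [DecidableEq n]
    (ρ : Matrix n n ℂ) : ℝ :=
  (1 / 2) * traceNorm (ρ - ρ.transpose)

def σx : Matrix (Fin 2) (Fin 2) ℂ := !![0, 1; 1, 0]
def σy : Matrix (Fin 2) (Fin 2) ℂ := !![0, -Complex.I; Complex.I, 0]

/-- The trace norm of a 2×2 antisymmetric matrix `!![0, z; -z, 0]` is `2 |z|`. -/
lemma tn_antisym (z : ℂ) : traceNorm !![0, z; -z, 0] = 2 * ‖z‖ := by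
  have hd : ((‖z‖ : ℂ) • (1 : Matrix (Fin 2) (Fin 2) ℂ))
      = Matrix.diagonal (fun _ => (‖z‖ : ℂ)) := by
    ext i j; by_cases h : i = j <;> simp [Matrix.diagonal, Matrix.one_apply, h]
  have hpsd : ((‖z‖ : ℂ) • (1 : Matrix (Fin 2) (Fin 2) ℂ)).PosSemidef := by
    rw [hd]
    exact Matrix.PosSemidef.diagonal (fun i => by
      simp [Complex.le_def, norm_nonneg])
  have hsq : ((‖z‖ : ℂ) • (1 : Matrix (Fin 2) (Fin 2) ℂ)) ^ 2
      = (!![0, z; -z, 0] : Matrix (Fin 2) (Fin 2) ℂ)ᴴ * !![0, z; -z, 0] := by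
    ext i j
    fin_cases i <;> fin_cases j <;>
      simp [pow_two, Matrix.mul_apply, Fin.sum_univ_two, Matrix.smul_apply,
        Matrix.one_apply] <;>
      rw [← Complex.ofReal_mul, ← sq, Complex.sq_norm, Complex.normSq_eq_conj_mul_self]
  have hA := Matrix.posSemidef_conjTranspose_mul_self !![0, z; -z, 0]
  have heig : ∀ i, hA.1.eigenvalues i = ‖z‖ ^ 2 := by
    intro i
    have h1 := hA.1.eigenvectorBasis.orthonormal.1 i
    rw [hA.1.eigenvalues_eq]
    generalize hA.1.eigenvectorBasis i = v at h1 ⊢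
    rw [← hsq, smul_pow, one_pow, smul_mulVec, one_mulVec, dotProduct_smul, dotProduct_comm,
      ← EuclideanSpace.inner_eq_star_dotProduct, inner_self_eq_norm_sq_to_K, h1]
    simp [← Complex.ofReal_pow]
  rw [traceNorm, Matrix.trace_mul_cycle, Unitary.coe_star_mul_self, one_mul, trace_diagonal]
  simp [heig, Fin.sum_univ_two]

lemma sub_transpose_eq (M : Matrix (Fin 2) (Fin 2) ℂ) :
    M - Mᵀ = !![0, M 0 1 - M 1 0; -(M 0 1 - M 1 0), 0] := by
  ext i j
  fin_cases i <;> fin_cases j <;> simp [Matrix.transpose_apply]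

/-- the robustness of imaginarity of a qubit state `ρ` in the basis
`B₁ = {u, d}` equals `|n_y cos φ − n_x sin φ|`. -/
theorem stmt3 (ρ : Matrix (Fin 2) (Fin 2) ℂ) (hρ : ρ.PosSemidef) (hTr : ρ.trace = 1)
    (θ φ : ℝ) (u d : Fin 2 → ℂ)
    (hu : u = ![(Real.cos (θ / 2) : ℂ),
      Complex.exp (φ * Complex.I) * (Real.sin (θ / 2) : ℂ)])
    (hd : d = ![(Real.sin (θ / 2) : ℂ),
      -(Complex.exp (φ * Complex.I) * (Real.cos (θ / 2) : ℂ))])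
    (M : Matrix (Fin 2) (Fin 2) ℂ)
    (hM : M = Matrix.of fun i j : Fin 2 => star (![u, d] i) ⬝ᵥ ρ.mulVec (![u, d] j)) :
    roi M = |((ρ * σy).trace).re * Real.cos φ - ((ρ * σx).trace).re * Real.sin φ| := by
  have h10 : ρ 1 0 = (starRingEnd ℂ) (ρ 0 1) := by
    conv_lhs => rw [← hρ.1]
    rfl
  rw [roi, sub_transpose_eq, tn_antisym]
  have h2 : ∀ x : ℝ, (1/2 : ℝ) * (2 * x) = x := fun x => by ring
  rw [h2]
  rw [show |((ρ * σy).trace).re * Real.cos φ - ((ρ * σx).trace).re * Real.sin φ|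
    = ‖(Complex.I * ((((ρ * σy).trace).re * Real.cos φ
      - ((ρ * σx).trace).re * Real.sin φ : ℝ) : ℂ))‖ by
    rw [norm_mul, Complex.norm_I, Complex.norm_real, one_mul, Real.norm_eq_abs]]
  congr 1
  subst hM hu hd
  simp only [Matrix.of_apply, Matrix.cons_val', Matrix.cons_val_zero, Matrix.cons_val_one,
    Matrix.head_cons, Matrix.empty_val', Matrix.cons_val_fin_one, Matrix.head_fin_const,
    dotProduct, Matrix.mulVec, Fin.sum_univ_two, Pi.star_apply, star_mul', star_neg,
    Complex.star_def, ← Complex.exp_conj, _root_.map_mul, Complex.conj_I, Complex.conj_ofReal,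
    Matrix.trace, Matrix.diag, Matrix.mul_apply, σx, σy, h10, Complex.exp_mul_I,
    ← Complex.ofReal_cos, ← Complex.ofReal_sin]
  simp only [map_add, _root_.map_mul, map_neg, Complex.conj_ofReal, Complex.conj_I,
    Complex.ext_iff, Complex.add_re, Complex.add_im, Complex.mul_re, Complex.mul_im,
    Complex.sub_re, Complex.sub_im, Complex.neg_re, Complex.neg_im, Complex.I_re,
    Complex.I_im, Complex.ofReal_re, Complex.ofReal_im, Complex.conj_re, Complex.conj_im,
    Complex.one_re, Complex.one_im, Complex.zero_re, Complex.zero_im, Complex.ofReal_mul,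
    Complex.ofReal_sub]
  constructor
  · ring
  · linear_combination (-2*((ρ 0 1).re * Real.sin φ + (ρ 0 1).im * Real.cos φ)) *
      Real.sin_sq_add_cos_sq (θ/2)
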